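/- The quotient k-algebra k[X,Y]/(X² − Y², XY) is a 4-dimensional local symmetric k-algebra with basis {1, X, Y, X²}, where k is a field of characteristic 2. -/

import Mathlib

open MvPolynomial

set_option synthInstance.maxHeartbeats 1000000
set_option maxHeartbeats 1000000

noncomputable section Stmt16aux
variable (k : Type*) [Field k]

abbrev Ig : Ideal (MvPolynomial (Fin 2) k) := Ideal.span {X 0 ^ 2 - X 1 ^ 2, X 0 * X 1}

abbrev Qk := MvPolynomial (Fin 2) k ⧸ Ig k

def phi : MvPolynomial (Fin 2) k →ₗ[k] (Fin 4 → k) where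
  toFun p := ![coeff 0 p, coeff (Finsupp.single 0 1) p, coeff (Finsupp.single 1 1) p,
    coeff (Finsupp.single 0 2) p + coeff (Finsupp.single 1 2) p]
  map_add' p q := by funext i; fin_cases i <;> simp [coeff_add] <;> ring
  map_smul' c p := by funext i; fin_cases i <;> simp [coeff_smul] <;> ring

lemma phi_vanish (p : MvPolynomial (Fin 2) k) (hp : p ∈ Ig k) : phi k p = 0 := by
  rw [Ideal.mem_span_pair] at hp
  obtain ⟨u, v, rfl⟩ := hp
  have hg2 : (X 0 * X 1 : MvPolynomial (Fin 2) k)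
      = monomial (Finsupp.single 0 1 + Finsupp.single 1 1) 1 := by
    rw [X, X, monomial_mul, one_mul]
  rw [X_pow_eq_monomial, X_pow_eq_monomial, hg2]
  funext i
  fin_cases i <;>
    simp [phi, mul_sub, coeff_sub, coeff_mul_monomial',
      Finsupp.le_def, Fin.forall_fin_two, Finsupp.single_apply, Finsupp.add_apply]

def phibar : (MvPolynomial (Fin 2) k ⧸ Ig k) →ₗ[k] (Fin 4 → k) :=
  (Submodule.liftQ ((Ig k).restrictScalars k) (phi k) fun p hp => phi_vanish k p hp).comp
    (Submodule.Quotient.restrictScalarsEquiv k (Ig k)).symm.toLinearMap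

lemma phibar_mk (p : MvPolynomial (Fin 2) k) :
    phibar k (Ideal.Quotient.mk (Ig k) p) = phi k p := rfl


def xx : Qk k := Ideal.Quotient.mk _ (X 0)
def yy : Qk k := Ideal.Quotient.mk _ (X 1)

lemma rel1 : (xx k) ^ 2 - (yy k) ^ 2 = 0 := by
  have h : Ideal.Quotient.mk (Ig k) (X 0 ^ 2 - X 1 ^ 2) = 0 :=
    Ideal.Quotient.eq_zero_iff_mem.mpr (Ideal.subset_span (by simp))
  rw [map_sub, map_pow, map_pow] at h
  exact h

lemma rel2 : xx k * yy k = 0 := by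
  have h : Ideal.Quotient.mk (Ig k) (X 0 * X 1) = 0 :=
    Ideal.Quotient.eq_zero_iff_mem.mpr (Ideal.subset_span (by simp))
  rw [map_mul] at h
  exact h

lemma rel_y2 : (yy k) ^ 2 = (xx k) ^ 2 := (sub_eq_zero.mp (rel1 k)).symm

lemma rel_x3 : (xx k) ^ 3 = 0 := by
  linear_combination (xx k) * rel1 k + (yy k) * rel2 k

lemma rel_y3 : (yy k) ^ 3 = 0 := by
  linear_combination (-(yy k)) * rel1 k + (xx k) * rel2 k

def pv : Fin 4 → MvPolynomial (Fin 2) k := ![1, X 0, X 1, X 0 ^ 2]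

def vv : Fin 4 → Qk k := fun i => Ideal.Quotient.mk _ (pv k i)

lemma mem_span_mk (p : MvPolynomial (Fin 2) k) :
    Ideal.Quotient.mk (Ig k) p ∈ Submodule.span k (Set.range (vv k)) := by
  set S := Submodule.span k (Set.range (vv k)) with hS
  have hv : ∀ i, vv k i ∈ S := fun i => Submodule.subset_span ⟨i, rfl⟩
  have h1 : (1 : Qk k) ∈ S := hv 0
  have hx : xx k ∈ S := hv 1
  have hy : yy k ∈ S := hv 2
  have hx2 : (xx k) ^ 2 ∈ S := hv 3
  have key : ∀ (s : Qk k), s ∈ S → ∀ i : Fin 2,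
      s * Ideal.Quotient.mk (Ig k) (X i) ∈ S := by
    intro s hs i
    induction hs using Submodule.span_induction with
    | mem z hz =>
      obtain ⟨j, rfl⟩ := hz
      fin_cases i <;> fin_cases j
      · show (1 : Qk k) * xx k ∈ S
        rw [one_mul]; exact hx
      · show xx k * xx k ∈ S
        rw [← sq]; exact hx2
      · show yy k * xx k ∈ S
        rw [mul_comm, rel2]; exact Submodule.zero_mem S
      · show (xx k) ^ 2 * xx k ∈ S
        rw [← pow_succ, rel_x3]; exact Submodule.zero_mem S
      · show (1 : Qk k) * yy k ∈ S
        rw [one_mul]; exact hy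
      · show xx k * yy k ∈ S
        rw [rel2]; exact Submodule.zero_mem S
      · show yy k * yy k ∈ S
        rw [← sq, rel_y2]; exact hx2
      · show (xx k) ^ 2 * yy k ∈ S
        have : (xx k) ^ 2 * yy k = xx k * (xx k * yy k) := by ring
        rw [this, rel2, mul_zero]; exact Submodule.zero_mem S
    | zero => rw [zero_mul]; exact Submodule.zero_mem S
    | add a b _ _ ha hb => rw [add_mul]; exact Submodule.add_mem S ha hb
    | smul c a _ ha => rw [smul_mul_assoc]; exact Submodule.smul_mem S c ha
  induction p using MvPolynomial.induction_on with
  | C a =>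
    have h : Ideal.Quotient.mk (Ig k) (C a) = a • (1 : Qk k) := by
      rw [← Algebra.algebraMap_eq_smul_one]; rfl
    rw [h]; exact Submodule.smul_mem S a h1
  | add p q hp hq => rw [map_add]; exact Submodule.add_mem S hp hq
  | mul_X p i hp => rw [map_mul]; exact key _ hp i

lemma phibar_vv : (phibar k) ∘ (vv k) = fun i => Pi.single i (1 : k) := by
  funext i j
  fin_cases i <;>
    · simp only [Function.comp_apply, vv, pv, Matrix.cons_val_zero, Matrix.cons_val_one,
        Matrix.head_cons, Matrix.cons_val_two, Matrix.tail_cons, Matrix.cons_val_three]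
      rw [phibar_mk]
      fin_cases j <;>
        simp [phi, coeff_one, coeff_X', coeff_X_pow, Pi.single_apply, eq_comm,
          Finsupp.single_eq_single_iff, Finsupp.single_eq_zero]

lemma indep : LinearIndependent k (vv k) := by
  apply LinearIndependent.of_comp (phibar k)
  rw [phibar_vv]
  have := (Pi.basisFun k (Fin 4)).linearIndependent
  convert this using 1
  funext i
  simp [Pi.basisFun_apply]

def bb : Module.Basis (Fin 4) k (Qk k) :=
  Module.Basis.mk (indep k) (fun z _ => by
    obtain ⟨p, rfl⟩ := Ideal.Quotient.mk_surjective z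
    exact mem_span_mk k p)

lemma bb_apply (i : Fin 4) : bb k i = Ideal.Quotient.mk (Ig k) (pv k i) := by
  rw [bb, Module.Basis.mk_apply]; rfl

lemma bb0 : bb k 0 = 1 := by rw [bb_apply]; simp [pv]
lemma bb1 : bb k 1 = xx k := by rw [bb_apply]; rfl
lemma bb2 : bb k 2 = yy k := by rw [bb_apply]; rfl
lemma bb3 : bb k 3 = (xx k) ^ 2 := by
  rw [bb_apply]
  show Ideal.Quotient.mk (Ig k) (X 0 ^ 2) = (xx k) ^ 2
  rw [map_pow]; rfl

lemma rel_x2y : (xx k) ^ 2 * yy k = 0 := by linear_combination (xx k) * rel2 k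
lemma rel_xy2 : xx k * (yy k) ^ 2 = 0 := by linear_combination (yy k) * rel2 k
lemma rel_x4 : (xx k) ^ 4 = 0 := by
  linear_combination (xx k) ^ 2 * rel1 k + (xx k * yy k) * rel2 k
lemma rel_x5 : (xx k) ^ 5 = 0 := by
  linear_combination (xx k) ^ 3 * rel1 k + ((xx k) ^ 2 * yy k) * rel2 k
lemma rel_x6 : (xx k) ^ 6 = 0 := by
  linear_combination (xx k) ^ 4 * rel1 k + ((xx k) ^ 3 * yy k) * rel2 k
lemma rel_x2y2 : (xx k) ^ 2 * (yy k) ^ 2 = 0 := by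
  linear_combination (xx k * yy k) * rel2 k
lemma rel_x3y : (xx k) ^ 3 * yy k = 0 := by linear_combination (xx k) ^ 2 * rel2 k
lemma rel_x4y : (xx k) ^ 4 * yy k = 0 := by linear_combination (xx k) ^ 3 * rel2 k

lemma nil3 (c1 c2 c3 : k) :
    (c1 • xx k + c2 • yy k + c3 • (xx k) ^ 2) ^ 3 = 0 := by
  have hs : ∀ (c : k) (z : Qk k), c • z = algebraMap k (Qk k) c * z :=
    fun c z => Algebra.smul_def c z
  rw [hs, hs, hs]
  set C1 := algebraMap k (Qk k) c1
  set C2 := algebraMap k (Qk k) c2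
  set C3 := algebraMap k (Qk k) c3
  linear_combination C1 ^ 3 * rel_x3 k + C2 ^ 3 * rel_y3 k + C3 ^ 3 * rel_x6 k +
    3 * C1 ^ 2 * C2 * rel_x2y k + 3 * C1 * C2 ^ 2 * rel_xy2 k +
    3 * C1 ^ 2 * C3 * rel_x4 k + 3 * C1 * C3 ^ 2 * rel_x5 k +
    3 * C2 ^ 2 * C3 * rel_x2y2 k + 3 * C2 * C3 ^ 2 * rel_x4y k +
    6 * C1 * C2 * C3 * rel_x3y k

lemma qk_local : IsLocalRing (Qk k) := by
  have hnt : Nontrivial (Qk k) := ⟨1, 0, by rw [← bb0 k]; exact (bb k).ne_zero 0⟩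
  apply IsLocalRing.of_isUnit_or_isUnit_one_sub_self
  intro a
  have hrep := (bb k).sum_repr a
  rw [Fin.sum_univ_four, bb0, bb1, bb2, bb3] at hrep
  set c0 := (bb k).repr a 0
  set c1 := (bb k).repr a 1
  set c2 := (bb k).repr a 2
  set c3 := (bb k).repr a 3
  have hnil : IsNilpotent (c1 • xx k + c2 • yy k + c3 • (xx k) ^ 2) :=
    ⟨3, nil3 k c1 c2 c3⟩
  by_cases h : c0 = 0
  · right
    have ha : a = c1 • xx k + c2 • yy k + c3 • (xx k) ^ 2 := by
      rw [← hrep, h, zero_smul, zero_add]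
    rw [ha]
    exact hnil.isUnit_one_sub
  · left
    have hu : IsUnit (c0 • (1 : Qk k)) := by
      rw [← Algebra.algebraMap_eq_smul_one]
      exact (isUnit_iff_ne_zero.mpr h).map (algebraMap k (Qk k))
    have ha : a = c0 • (1 : Qk k) + (c1 • xx k + c2 • yy k + c3 • (xx k) ^ 2) := by
      rw [← hrep]; ring
    rw [ha]
    exact hnil.isUnit_add_left_of_commute hu (Commute.all _ _)

def tau : Qk k →ₗ[k] k := (LinearMap.proj 3).comp (phibar k)

lemma tau_mk (p : MvPolynomial (Fin 2) k) :
    tau k (Ideal.Quotient.mk (Ig k) p)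
      = coeff (Finsupp.single 0 2) p + coeff (Finsupp.single 1 2) p := rfl

lemma tau_one : tau k 1 = 0 := by
  rw [show (1 : Qk k) = Ideal.Quotient.mk (Ig k) 1 from (map_one _).symm, tau_mk]
  simp [coeff_one, eq_comm, Finsupp.single_eq_zero]

lemma tau_x : tau k (xx k) = 0 := by
  rw [xx, tau_mk]
  try simp [coeff_X', Finsupp.single_eq_single_iff]

lemma tau_y : tau k (yy k) = 0 := by
  rw [yy, tau_mk]
  try simp [coeff_X', Finsupp.single_eq_single_iff]

lemma tau_x2 : tau k ((xx k) ^ 2) = 1 := by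
  rw [show (xx k) ^ 2 = Ideal.Quotient.mk (Ig k) (X 0 ^ 2) from (map_pow _ _ _).symm, tau_mk]
  simp [coeff_X_pow, Finsupp.single_eq_single_iff]

def Bf : Qk k →ₗ[k] Qk k →ₗ[k] k :=
  LinearMap.mk₂ k (fun a b => tau k (a * b))
    (fun a a' b => by simp [add_mul])
    (fun c a b => by simp [smul_mul_assoc])
    (fun a b b' => by simp [mul_add])
    (fun c a b => by simp [mul_smul_comm])

lemma Bf_apply (a b : Qk k) : Bf k a b = tau k (a * b) := rfl

lemma tau_y2 : tau k ((yy k) ^ 2) = 1 := by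
  rw [show (yy k) ^ 2 = Ideal.Quotient.mk (Ig k) (X 1 ^ 2) from (map_pow _ _ _).symm, tau_mk]
  simp [coeff_X_pow, Finsupp.single_eq_single_iff]

lemma nondeg (a : Qk k) (h : ∀ b, Bf k a b = 0) : a = 0 := by
  have hs : ∀ (c : k) (z : Qk k), c • z = algebraMap k (Qk k) c * z :=
    fun c z => Algebra.smul_def c z
  have hrep := (bb k).sum_repr a
  rw [Fin.sum_univ_four, bb0, bb1, bb2, bb3] at hrep
  set c0 := (bb k).repr a 0
  set c1 := (bb k).repr a 1
  set c2 := (bb k).repr a 2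
  set c3 := (bb k).repr a 3
  have h1 := h 1
  rw [Bf_apply, ← hrep, mul_one, map_add, map_add, map_add, map_smul, map_smul, map_smul,
    map_smul, tau_one, tau_x, tau_y, tau_x2] at h1
  simp only [smul_eq_mul, mul_zero, mul_one, zero_add, add_zero] at h1
  have h2 := h (xx k)
  rw [Bf_apply, ← hrep] at h2
  have e2 : (c0 • (1 : Qk k) + c1 • xx k + c2 • yy k + c3 • (xx k) ^ 2) * xx k
      = c0 • xx k + c1 • (xx k) ^ 2 := by
    simp only [hs]
    linear_combination (algebraMap k (Qk k) c2) * rel2 k + (algebraMap k (Qk k) c3) * rel_x3 k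
  rw [e2, map_add, map_smul, map_smul, tau_x, tau_x2] at h2
  simp only [smul_eq_mul, mul_zero, mul_one, zero_add] at h2
  have h3 := h (yy k)
  rw [Bf_apply, ← hrep] at h3
  have e3 : (c0 • (1 : Qk k) + c1 • xx k + c2 • yy k + c3 • (xx k) ^ 2) * yy k
      = c0 • yy k + c2 • (yy k) ^ 2 := by
    simp only [hs]
    linear_combination (algebraMap k (Qk k) c1) * rel2 k + (algebraMap k (Qk k) c3) * rel_x2y k
  rw [e3, map_add, map_smul, map_smul, tau_y, tau_y2] at h3
  simp only [smul_eq_mul, mul_zero, mul_one, zero_add] at h3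
  have h4 := h ((xx k) ^ 2)
  rw [Bf_apply, ← hrep] at h4
  have e4 : (c0 • (1 : Qk k) + c1 • xx k + c2 • yy k + c3 • (xx k) ^ 2) * (xx k) ^ 2
      = c0 • (xx k) ^ 2 := by
    simp only [hs]
    linear_combination (algebraMap k (Qk k) c1) * rel_x3 k
      + (algebraMap k (Qk k) c2) * rel_x2y k + (algebraMap k (Qk k) c3) * rel_x4 k
  rw [e4, map_smul, tau_x2] at h4
  simp only [smul_eq_mul, mul_one] at h4
  rw [← hrep, h1, h2, h3, h4]
  simp

end Stmt16aux

/-- `k[X,Y]/(X² − Y², XY)` for a field `k` of characteristic 2 is a 4-dimensional local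
symmetric `k`-algebra with basis `{1, X, Y, X²}`. -/
theorem stmt_16 (k : Type*) [Field k] [CharP k 2] :
    let R := MvPolynomial (Fin 2) k ⧸
      Ideal.span {(X 0 : MvPolynomial (Fin 2) k) ^ 2 - X 1 ^ 2, X 0 * X 1}
    let x : R := Ideal.Quotient.mk _ (X 0)
    let y : R := Ideal.Quotient.mk _ (X 1)
    (∃ b : Module.Basis (Fin 4) k R, b 0 = 1 ∧ b 1 = x ∧ b 2 = y ∧ b 3 = x ^ 2) ∧
    IsLocalRing R ∧
    (∃ B : R →ₗ[k] R →ₗ[k] k,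
      (∀ a b, B a b = B b a) ∧ (∀ a b c, B (a * b) c = B a (b * c)) ∧
      (∀ a, (∀ b, B a b = 0) → a = 0)) := by
  intro R x y
  refine ⟨⟨bb k, bb0 k, bb1 k, bb2 k, bb3 k⟩, qk_local k,
    Bf k, fun a b => ?_, fun a b c => ?_, nondeg k⟩
  · rw [Bf_apply, Bf_apply, mul_comm]
  · rw [Bf_apply, Bf_apply, mul_assoc]
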